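/- Let g_x, g_p be positive integers, d ≥ 1 an integer, h_x, h_p > 0, and m ≥ m_min > 0 real numbers, and set p_max := g_p·h_p. Let D be the discrete derivative operator of order 2d with periodic boundary conditions on ℂ^{ℤ/g_xℤ} with grid spacing h_x, and let M be the g_p×g_p diagonal matrix with entries M_{p̂,p̂} = (p̂·h_p)/m for p̂ ∈ {0,…,g_p−1}. Then ‖D ⊗ M‖ ≤ (p_max/m_min) · 2·(ln d + 1)/h_x. -/

import Mathlib

open scoped Matrix.Norms.L2Operator Kronecker
open Matrix

/-- The central finite-difference coefficients `c_{d,k}` of order `2d`: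
`c_{d,k} = (-1)^(k+1) · (d!)² / (k·(d-k)!·(d+k)!)` for `k ≠ 0`, and `c_{d,0} = 0`. -/
noncomputable def centralFDCoeff (d : ℕ) (k : ℤ) : ℝ :=
  if k = 0 then 0
  else (-1 : ℝ) ^ (k + 1) * ((d.factorial : ℝ)) ^ 2 /
    ((k : ℝ) * (((d : ℤ) - k).toNat.factorial : ℝ) * (((d : ℤ) + k).toNat.factorial : ℝ))

/-- The discrete derivative operator of order `2d` with periodic boundary conditions on
`ℂ^{ℤ/gℤ}` with grid spacing `h`:  `D = (1/h)·Σ_x Σ_{k=-d}^{d} c_{d,k}·E_{x-k,x}`. -/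
noncomputable def discreteDeriv (g : ℕ) [NeZero g] (h : ℝ) (d : ℕ) :
    Matrix (ZMod g) (ZMod g) ℂ :=
  ((1 / h : ℝ) : ℂ) •
    ∑ x : ZMod g, ∑ k ∈ Finset.Icc (-(d : ℤ)) (d : ℤ),
      ((centralFDCoeff d k : ℝ) : ℂ) • Matrix.single (x - (k : ZMod g)) x (1 : ℂ)

/-- Operator norm bound for a "monomial" matrix: a matrix with at most one nonzero
entry `f i` in each row `i`, placed in column `σ i` for a permutation `σ`. -/
lemma norm_monomial_le {ι : Type*} [Fintype ι] [DecidableEq ι] (σ : Equiv.Perm ι)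
    (f : ι → ℂ) (C : ℝ) (hC : 0 ≤ C) (hf : ∀ i, ‖f i‖ ≤ C) :
    ‖(Matrix.of fun i j => if j = σ i then f i else 0 : Matrix ι ι ℂ)‖ ≤ C := by
  rw [Matrix.l2_opNorm_def]
  refine ContinuousLinearMap.opNorm_le_bound _ hC fun x => ?_
  set A : Matrix ι ι ℂ := Matrix.of fun i j => if j = σ i then f i else 0
  have hmv : ∀ i, (A *ᵥ (WithLp.equiv 2 (ι → ℂ)) x) i = f i * x (σ i) := by
    intro i
    simp only [Matrix.mulVec, dotProduct, A, Matrix.of_apply]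
    rw [Finset.sum_eq_single (σ i)]
    · simp
    · intro b _ hb; simp [hb]
    · intro hmem; exact absurd (Finset.mem_univ _) hmem
  have hA : (Matrix.toEuclideanLin.trans LinearMap.toContinuousLinearMap A) x
      = Matrix.toEuclideanLin A x := rfl
  rw [hA, Matrix.toEuclideanLin_apply]
  rw [EuclideanSpace.norm_eq]
  have hsum : ∑ i, ‖f i * x (σ i)‖ ^ 2 ≤ C ^ 2 * ‖x‖ ^ 2 := by
    have h1 : ∑ i, ‖f i * x (σ i)‖ ^ 2 ≤ ∑ i, C ^ 2 * ‖x (σ i)‖ ^ 2 := by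
      refine Finset.sum_le_sum fun i _ => ?_
      rw [norm_mul, mul_pow]
      exact mul_le_mul_of_nonneg_right
        (pow_le_pow_left₀ (norm_nonneg _) (hf i) 2) (by positivity)
    have h2 : ∑ i, C ^ 2 * ‖x (σ i)‖ ^ 2 = C ^ 2 * ∑ i, ‖x i‖ ^ 2 := by
      rw [← Finset.mul_sum]
      congr 1
      exact Equiv.sum_comp σ (fun i => ‖x i‖ ^ 2)
    have h3 : ∑ i, ‖x i‖ ^ 2 = ‖x‖ ^ 2 := by
      rw [EuclideanSpace.norm_eq, Real.sq_sqrt]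
      positivity
    rw [h2, h3] at h1; exact h1
  calc Real.sqrt (∑ i, ‖(WithLp.equiv 2 (ι → ℂ)).symm
        ((Matrix.of fun i j => if j = σ i then f i else 0 : Matrix ι ι ℂ) *ᵥ
          (WithLp.equiv 2 (ι → ℂ)) x) i‖ ^ 2)
      = Real.sqrt (∑ i, ‖f i * x (σ i)‖ ^ 2) := by
        congr 1; refine Finset.sum_congr rfl fun i _ => ?_
        rw [show ((WithLp.equiv 2 (ι → ℂ)).symm ((Matrix.of fun i j => if j = σ i then f i else 0 : Matrix ι ι ℂ) *ᵥ (WithLp.equiv 2 (ι → ℂ)) x)) i = f i * x (σ i) from hmv i]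
    _ ≤ Real.sqrt (C ^ 2 * ‖x‖ ^ 2) := Real.sqrt_le_sqrt hsum
    _ = C * ‖x‖ := by
        rw [← mul_pow, Real.sqrt_sq (by positivity)]

/-- `(d!)² ≤ (d-j)!·(d+j)!` for `j ≤ d`. -/
lemma fact_sq_le (d : ℕ) : ∀ j, j ≤ d →
    d.factorial * d.factorial ≤ (d - j).factorial * (d + j).factorial := by
  intro j
  induction j with
  | zero => simp
  | succ n ih =>
    intro h
    have ihn := ih (Nat.le_of_succ_le h)
    refine ihn.trans ?_
    have e1 : d - n = (d - (n + 1)) + 1 := by omega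
    have e2 : d + (n + 1) = (d + n) + 1 := by omega
    rw [e1, e2, Nat.factorial_succ, Nat.factorial_succ]
    have : (d - (n + 1)) + 1 ≤ d + n + 1 := by omega
    calc (d - (n+1) + 1) * (d - (n+1)).factorial * (d + n).factorial
        ≤ (d + n + 1) * (d - (n+1)).factorial * (d + n).factorial := by
          exact Nat.mul_le_mul_right _ (Nat.mul_le_mul_right _ this)
      _ = (d - (n+1)).factorial * ((d + n + 1) * (d + n).factorial) := by ring

/-- The central finite-difference coefficients are bounded by `1/|k|`. -/
lemma abs_centralFDCoeff_le (d : ℕ) (k : ℤ) (hk : k ∈ Finset.Icc (-(d:ℤ)) d) :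
    |centralFDCoeff d k| ≤ if k = 0 then 0 else 1 / |(k:ℝ)| := by
  simp only [Finset.mem_Icc] at hk
  by_cases h0 : k = 0
  · simp [centralFDCoeff, h0]
  · rw [if_neg h0]
    set a := ((d:ℤ) - k).toNat with ha
    set b := ((d:ℤ) + k).toNat with hb
    have hfact : d.factorial * d.factorial ≤ a.factorial * b.factorial := by
      rcases le_or_gt 0 k with hpos | hneg
      · have : a = d - k.toNat ∧ b = d + k.toNat := by constructor <;> omega
        rw [this.1, this.2]
        exact fact_sq_le d k.toNat (by omega)
      · have : a = d + (-k).toNat ∧ b = d - (-k).toNat := by constructor <;> omega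
        rw [this.1, this.2]
        exact (fact_sq_le d (-k).toNat (by omega)).trans_eq (Nat.mul_comm _ _)
    have hpm : |(-1:ℝ) ^ (k + 1)| = 1 := by
      rcases Int.even_or_odd (k + 1) with he | ho
      · rw [he.neg_one_zpow]; exact abs_one
      · rw [ho.neg_one_zpow]; simp
    rw [centralFDCoeff, if_neg h0, abs_div, abs_mul, hpm, one_mul, abs_mul, abs_mul]
    rw [abs_of_nonneg (by positivity : (0:ℝ) ≤ (d.factorial : ℝ) ^ 2),
      abs_of_nonneg (by positivity : (0:ℝ) ≤ (a.factorial : ℝ)),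
      abs_of_nonneg (by positivity : (0:ℝ) ≤ (b.factorial : ℝ))]
    have hk0 : (0:ℝ) < |(k:ℝ)| := abs_pos.2 (Int.cast_ne_zero.2 h0)
    have hfa : (0:ℝ) < (a.factorial : ℝ) := by positivity
    have hfb : (0:ℝ) < (b.factorial : ℝ) := by positivity
    rw [div_le_div_iff₀ (by positivity) hk0]
    have hR : (d.factorial : ℝ) * (d.factorial : ℝ) ≤ (a.factorial : ℝ) * (b.factorial : ℝ) := by
      exact_mod_cast hfact
    nlinarith [hk0.le, hR, mul_le_mul_of_nonneg_left hR hk0.le]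

lemma wsum_eq (d : ℕ) :
    ∑ k ∈ Finset.Icc (-(d:ℤ)) (d:ℤ), (if k = 0 then (0:ℝ) else 1 / |(k:ℝ)|)
      = 2 * ∑ j ∈ Finset.Icc 1 d, (1 / (j:ℝ)) := by
  induction d with
  | zero => simp
  | succ n ih =>
    have hI : Finset.Icc (-(n+1:ℤ)) ((n:ℤ)+1)
        = insert (-(n+1:ℤ)) (insert ((n:ℤ)+1) (Finset.Icc (-(n:ℤ)) (n:ℤ))) := by
      ext k; simp only [Finset.mem_Icc, Finset.mem_insert]; omega
    have h1 : (-(n+1:ℤ)) ∉ insert ((n:ℤ)+1) (Finset.Icc (-(n:ℤ)) (n:ℤ)) := by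
      simp only [Finset.mem_insert, Finset.mem_Icc]; omega
    have h2 : ((n:ℤ)+1) ∉ Finset.Icc (-(n:ℤ)) (n:ℤ) := by
      simp only [Finset.mem_Icc]; omega
    rw [show ((n+1:ℕ):ℤ) = (n:ℤ)+1 by push_cast; ring, show (-((n:ℤ)+1)) = (-(n+1:ℤ)) by ring,
      hI, Finset.sum_insert h1, Finset.sum_insert h2, ih,
      Finset.sum_Icc_succ_top (by omega : 1 ≤ n + 1)]
    rw [if_neg (show ¬(-(n+1:ℤ)) = 0 by omega), if_neg (show ¬((n:ℤ)+1) = 0 by omega)]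
    push_cast
    rw [abs_neg, abs_of_nonneg (show (0:ℝ) ≤ (n:ℝ)+1 by positivity)]
    ring

lemma wsum_le (d : ℕ) :
    ∑ k ∈ Finset.Icc (-(d:ℤ)) (d:ℤ), (if k = 0 then (0:ℝ) else 1 / |(k:ℝ)|)
      ≤ 2 * (Real.log d + 1) := by
  rw [wsum_eq]
  have h1 : ∑ j ∈ Finset.Icc 1 d, (1 / (j:ℝ)) = (harmonic d : ℝ) := by
    rw [harmonic_eq_sum_Icc]
    push_cast
    simp [one_div]
  rw [h1]
  have := harmonic_le_one_add_log d
  linarith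

/-- The shift-by-`k` monomial matrix tensored with `diagonal f`. -/
noncomputable def shiftTensor (g gp : ℕ) [NeZero g] (k : ℤ) (f : Fin gp → ℂ) :
    Matrix (ZMod g × Fin gp) (ZMod g × Fin gp) ℂ :=
  Matrix.of fun i j => if j = (i.1 + (k : ZMod g), i.2) then f i.2 else 0

lemma kron_decomp (g gp : ℕ) [NeZero g] (h : ℝ) (d : ℕ) (f : Fin gp → ℂ) :
    discreteDeriv g h d ⊗ₖ Matrix.diagonal f =
      ((1 / h : ℝ) : ℂ) • ∑ k ∈ Finset.Icc (-(d : ℤ)) (d : ℤ),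
        ((centralFDCoeff d k : ℝ) : ℂ) • shiftTensor g gp k f := by
  rw [discreteDeriv, smul_kronecker]
  congr 1
  ext ⟨y, p⟩ ⟨x, q⟩
  simp only [kroneckerMap_apply, Matrix.sum_apply, Matrix.smul_apply, Finset.sum_apply,
    Matrix.single, Matrix.of_apply, Matrix.diagonal_apply, shiftTensor, smul_eq_mul]
  rw [Finset.sum_comm, Finset.sum_mul]
  refine Finset.sum_congr rfl fun k _ => ?_
  have hs : (∑ x1 : ZMod g, ((centralFDCoeff d k : ℝ) : ℂ) *
      if x1 - (k : ZMod g) = y ∧ x1 = x then 1 else 0)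
      = ((centralFDCoeff d k : ℝ) : ℂ) * if x - (k : ZMod g) = y then 1 else 0 := by
    rw [Finset.sum_eq_single x]
    · simp
    · intro b _ hb; simp [hb]
    · simp
  rw [hs]
  simp only [Prod.mk.injEq]
  have hxy : (x - (k : ZMod g) = y) ↔ (x = y + (k : ZMod g)) := sub_eq_iff_eq_add
  by_cases h2 : p = q
  · by_cases h1 : x = y + (k : ZMod g) <;> simp [hxy, h1, h2, eq_comm] <;> ring
  · have h2' : q ≠ p := fun hh => h2 hh.symm
    by_cases h1 : x = y + (k : ZMod g) <;> simp [hxy, h1, h2, h2']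

/-- **Spectral norm bound on the NVE kinetic Liouvillian term** `K^{(NVE)}_{n,j} = D ⊗ M`,
with `M` the diagonal momentum matrix `phat·h_p/m`:
`‖D ⊗ M‖ ≤ (p_max/m_min)·2·(ln d + 1)/h_x` where `p_max = g_p·h_p`. -/
theorem kinetic_NVE_norm_le (gx gp : ℕ) [NeZero gx] (hgp : 0 < gp)
    (d : ℕ) (hd : 1 ≤ d) (hx hp : ℝ) (hhx : 0 < hx) (hhp : 0 < hp)
    (m mmin : ℝ) (hm : mmin ≤ m) (hmmin : 0 < mmin) :
    ‖discreteDeriv gx hx d ⊗ₖ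
        Matrix.diagonal (fun phat : Fin gp => (((phat : ℕ) * hp / m : ℝ) : ℂ))‖ ≤
      (gp * hp / mmin) * (2 * (Real.log d + 1) / hx) := by
  set f : Fin gp → ℂ := fun phat => (((phat : ℕ) * hp / m : ℝ) : ℂ) with hf
  set C : ℝ := gp * hp / mmin with hCdef
  have hm0 : (0:ℝ) < m := lt_of_lt_of_le hmmin hm
  have hC : (0:ℝ) ≤ C := by positivity
  -- norm bound for each shift-tensor term
  have hT : ∀ k : ℤ, ‖shiftTensor gx gp k f‖ ≤ C := by
    intro k
    have hEq : shiftTensor gx gp k f =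
        Matrix.of fun i j =>
          if j = (Equiv.prodCongr (Equiv.addRight ((k : ZMod gx))) (Equiv.refl (Fin gp))) i
          then f i.2 else 0 := by
      ext ⟨a, b⟩ ⟨c, e⟩
      simp [shiftTensor, Equiv.prodCongr, Equiv.addRight]
    rw [hEq]
    refine norm_monomial_le _ _ C hC fun i => ?_
    rw [hf]
    rw [Complex.norm_real, Real.norm_eq_abs, abs_of_nonneg (by positivity)]
    refine div_le_div₀ (by positivity) ?_ hmmin hm
    exact mul_le_mul_of_nonneg_right
      (by exact_mod_cast (i.2.isLt.le : (i.2 : ℕ) ≤ gp)) hhp.le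
  have hsum : ‖∑ k ∈ Finset.Icc (-(d : ℤ)) (d : ℤ),
      ((centralFDCoeff d k : ℝ) : ℂ) • shiftTensor gx gp k f‖
      ≤ 2 * (Real.log d + 1) * C := by
    calc ‖∑ k ∈ Finset.Icc (-(d : ℤ)) (d : ℤ),
          ((centralFDCoeff d k : ℝ) : ℂ) • shiftTensor gx gp k f‖
        ≤ ∑ k ∈ Finset.Icc (-(d : ℤ)) (d : ℤ),
          ‖((centralFDCoeff d k : ℝ) : ℂ) • shiftTensor gx gp k f‖ := norm_sum_le _ _
      _ ≤ ∑ k ∈ Finset.Icc (-(d : ℤ)) (d : ℤ),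
          (if k = 0 then (0:ℝ) else 1 / |(k:ℝ)|) * C := by
          refine Finset.sum_le_sum fun k hk => ?_
          rw [norm_smul, Complex.norm_real, Real.norm_eq_abs]
          exact mul_le_mul (abs_centralFDCoeff_le d k hk) (hT k) (norm_nonneg _)
            (by split <;> positivity)
      _ = (∑ k ∈ Finset.Icc (-(d : ℤ)) (d : ℤ),
          (if k = 0 then (0:ℝ) else 1 / |(k:ℝ)|)) * C := by rw [Finset.sum_mul]
      _ ≤ 2 * (Real.log d + 1) * C := mul_le_mul_of_nonneg_right (wsum_le d) hC
  calc ‖discreteDeriv gx hx d ⊗ₖ Matrix.diagonal f‖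
      = ‖((1 / hx : ℝ) : ℂ)‖ * ‖∑ k ∈ Finset.Icc (-(d : ℤ)) (d : ℤ),
          ((centralFDCoeff d k : ℝ) : ℂ) • shiftTensor gx gp k f‖ := by
        rw [kron_decomp, norm_smul]
    _ ≤ (1 / hx) * (2 * (Real.log d + 1) * C) := by
        rw [Complex.norm_real, Real.norm_eq_abs, abs_of_nonneg (by positivity)]
        exact mul_le_mul_of_nonneg_left hsum (by positivity)
    _ = C * (2 * (Real.log d + 1) / hx) := by ring
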